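/- Let k ≥ 1 be an integer and let T : ℚᵏ → ℚ^{k−1} be the ℚ-linear map defined by T(a₁,…,a_k)_j := (k−j)·a_{j+1} − j·a_j for 1 ≤ j ≤ k−1. Then T is surjective, and the kernel of T is one-dimensional, spanned by the vector v with v_j := (j−1)!·(k−j)! for 1 ≤ j ≤ k. -/
import Mathlib


noncomputable section

/-- the map `T : ℚᵏ → ℚ^{k−1}`, `T(a)_j = (k−j)·a_{j+1} − j·a_j`
(for `1 ≤ j ≤ k−1`, here written with `0`-based indices), is surjective and its kernel is
one-dimensional, spanned by `v` with `v_j = (j−1)!·(k−j)!` (`1 ≤ j ≤ k`). -/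
theorem stmt6 (k : ℕ) (hk : 1 ≤ k) (T : (Fin k → ℚ) →ₗ[ℚ] (Fin (k - 1) → ℚ))
    (hT : ∀ (a : Fin k → ℚ) (j : Fin (k - 1)),
      T a j = ((k : ℚ) - (j.val + 1)) * a ⟨j.val + 1, by have := j.isLt; omega⟩ -
        ((j.val : ℚ) + 1) * a ⟨j.val, by have := j.isLt; omega⟩) :
    Function.Surjective T ∧
    LinearMap.ker T = Submodule.span ℚ
      {fun j : Fin k => ((Nat.factorial j.val : ℚ) * (Nat.factorial (k - 1 - j.val) : ℚ))} ∧
    Module.finrank ℚ ↥(LinearMap.ker T) = 1 := by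
  set v : Fin k → ℚ :=
    fun j : Fin k => ((Nat.factorial j.val : ℚ) * (Nat.factorial (k - 1 - j.val) : ℚ)) with hv
  -- key factorial identity
  have hfact : ∀ n (hn : n < k - 1),
      ((k : ℚ) - (n + 1)) * v ⟨n + 1, by omega⟩ = ((n : ℚ) + 1) * v ⟨n, by omega⟩ := by
    intro n hn
    simp only [hv]
    have h1 : k - 1 - (n + 1) = k - 2 - n := by omega
    have h2 : k - 1 - n = (k - 2 - n) + 1 := by omega
    have h3 : (k : ℚ) - (n + 1) = ((k - 2 - n : ℕ) : ℚ) + 1 := by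
      have : ((k - 2 - n : ℕ) : ℚ) = (k : ℚ) - 2 - n := by
        push_cast [Nat.cast_sub (by omega : n ≤ k - 2), Nat.cast_sub (by omega : 2 ≤ k)]
        ring
      rw [this]; ring
    rw [h1, h2, h3, Nat.factorial_succ (k - 2 - n), Nat.factorial_succ n]
    push_cast
    ring
  have hKne : ∀ n, n < k - 1 → ((k : ℚ) - (n + 1)) ≠ 0 := by
    intro n hn
    have : ((n : ℚ) + 1) < (k : ℚ) := by
      have : (n : ℚ) + 1 ≤ ((k:ℕ) : ℚ) - 1 := by
        have : (n + 1 : ℕ) ≤ k - 1 := by omega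
        have := (Nat.cast_le (α := ℚ)).mpr this
        push_cast [Nat.cast_sub (by omega : 1 ≤ k)] at this
        linarith
      linarith [show (0:ℚ) < 1 by norm_num]
    linarith
  have hTv : T v = 0 := by
    ext j
    rw [hT]
    have hj := j.isLt
    have := hfact j.val hj
    simp only [Pi.zero_apply]
    rw [show (⟨j.val + 1, by omega⟩ : Fin k) = ⟨j.val + 1, by have := j.isLt; omega⟩ from rfl] at this
    rw [show (⟨j.val, by omega⟩ : Fin k) = ⟨j.val, by have := j.isLt; omega⟩ from rfl] at this
    linarith [this]
  have hv0 : v ⟨0, by omega⟩ = ((k - 1).factorial : ℚ) := by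
    simp [hv, Nat.factorial]
  have hvne : v ≠ 0 := by
    intro h
    have := congrFun h ⟨0, by omega⟩
    rw [hv0] at this
    exact Nat.cast_ne_zero.mpr (Nat.factorial_ne_zero _) this
  have hker : LinearMap.ker T = Submodule.span ℚ {v} := by
    apply le_antisymm
    · intro a ha
      rw [LinearMap.mem_ker] at ha
      rw [Submodule.mem_span_singleton]
      set c : ℚ := a ⟨0, by omega⟩ / ((k - 1).factorial : ℚ) with hc
      refine ⟨c, ?_⟩
      have key : ∀ n (hn : n < k), a ⟨n, hn⟩ = c * v ⟨n, hn⟩ := by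
        intro n
        induction n with
        | zero =>
          intro hn
          rw [hv0, hc]
          field_simp
        | succ n ih =>
          intro hn
          have hn' : n < k - 1 := by omega
          have h0 := congrFun ha ⟨n, hn'⟩
          rw [hT] at h0
          simp only [Pi.zero_apply] at h0
          have hK := hKne n hn'
          have hfa := hfact n hn'
          have ihn := ih (by omega)
          rw [show (⟨n + 1, by have := hn'; omega⟩ : Fin k) = ⟨n + 1, hn⟩ from rfl] at h0
          rw [show (⟨n, by have := hn'; omega⟩ : Fin k) = ⟨n, by omega⟩ from rfl] at h0
          rw [show (⟨n + 1, by omega⟩ : Fin k) = ⟨n + 1, hn⟩ from rfl] at hfa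
          have : ((k : ℚ) - (n + 1)) * a ⟨n + 1, hn⟩ =
              ((k : ℚ) - (n + 1)) * (c * v ⟨n + 1, hn⟩) := by
            rw [ihn] at h0
            linear_combination h0 - c * hfa
          exact mul_left_cancel₀ hK this
      funext j
      have := (key j.val j.isLt).symm
      simpa using this
    · rw [Submodule.span_le, Set.singleton_subset_iff]
      exact LinearMap.mem_ker.mpr hTv
  have hrank : Module.finrank ℚ ↥(LinearMap.ker T) = 1 := by
    rw [hker]
    exact finrank_span_singleton hvne
  refine ⟨?_, hker, hrank⟩
  · rw [← LinearMap.range_eq_top]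
    apply Submodule.eq_top_of_finrank_eq
    have hrn := LinearMap.finrank_range_add_finrank_ker T
    rw [hrank] at hrn
    simp only [Module.finrank_fin_fun] at hrn ⊢
    omega

end
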